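/- Let a ∈ L¹(ℝ^d) be a nonnegative probability density and b : ℝ≥0 → (0,∞) with p(x) = b(|x|) integrable. Suppose that for some λ₀ > 0 and δ > 0 one has (a∗p)(x)/p(x) ≤ 1 + δ for all x with p(x) < λ. Define c(x) = ∫_{Δ(x)} p(z) dz where Δ(x) = {y : y_j ≥ x_j ∀j}. Then for every x ∈ Θ_λ(p) := {x : Δ(x) ⊂ {p < λ}}, one has (a∗c)(x)/c(x) ≤ 1 + δ. -/

import Mathlib

open MeasureTheory

theorem conv_estimate_transfers_to_octant_integral (d : ℕ)
    (a : EuclideanSpace ℝ (Fin d) → ℝ) (b : ℝ → ℝ) (lam δ : ℝ)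
    (hlam : 0 < lam) (hδ : 0 < δ)
    (ha_nonneg : ∀ x, 0 ≤ a x) (ha_int : Integrable a)
    (ha_prob : ∫ x, a x = 1)
    (hp_int : Integrable (fun y : EuclideanSpace ℝ (Fin d) => b ‖y‖))
    (hap : ∀ x : EuclideanSpace ℝ (Fin d), b ‖x‖ < lam →
      (∫ y, a (x - y) * b ‖y‖) ≤ (1 + δ) * b ‖x‖) :
    ∀ x : EuclideanSpace ℝ (Fin d), (∀ y : EuclideanSpace ℝ (Fin d),
        (∀ j, x j ≤ y j) → b ‖y‖ < lam) →
      (∫ y, a (x - y) * ∫ z in {z : EuclideanSpace ℝ (Fin d) | ∀ j, y j ≤ z j}, b ‖z‖) ≤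
        (1 + δ) * ∫ z in {z : EuclideanSpace ℝ (Fin d) | ∀ j, x j ≤ z j}, b ‖z‖ := by
  intro x hx
  set p : EuclideanSpace ℝ (Fin d) → ℝ := fun z => b ‖z‖ with hpdef
  set Q : Set (EuclideanSpace ℝ (Fin d)) := {w | ∀ j, 0 ≤ w j} with hQdef
  -- measurability of octants
  have hcoord : ∀ j : Fin d, Measurable fun z : EuclideanSpace ℝ (Fin d) => z j := fun j =>
    (EuclideanSpace.proj (𝕜 := ℝ) j).continuous.measurable
  have hΔm : ∀ y : EuclideanSpace ℝ (Fin d),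
      MeasurableSet {z : EuclideanSpace ℝ (Fin d) | ∀ j, y j ≤ z j} := by
    intro y
    have : {z : EuclideanSpace ℝ (Fin d) | ∀ j, y j ≤ z j}
        = ⋂ j, {z : EuclideanSpace ℝ (Fin d) | y j ≤ z j} := by
      ext z; simp [Set.mem_iInter]
    rw [this]
    exact MeasurableSet.iInter fun j => measurableSet_le measurable_const (hcoord j)
  have hQm : MeasurableSet Q := by
    have : Q = ⋂ j, {z : EuclideanSpace ℝ (Fin d) | 0 ≤ z j} := by
      ext z; simp [hQdef, Set.mem_iInter]
    rw [this]
    exact MeasurableSet.iInter fun j => measurableSet_le measurable_const (hcoord j)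
  -- octant integrals as translated integrals over Q
  have hΔ : ∀ y : EuclideanSpace ℝ (Fin d),
      (∫ z in {z : EuclideanSpace ℝ (Fin d) | ∀ j, y j ≤ z j}, p z) = ∫ w in Q, p (y + w) := by
    intro y
    have h1 : (∫ z in {z : EuclideanSpace ℝ (Fin d) | ∀ j, y j ≤ z j}, p z)
        = ∫ z, ({z : EuclideanSpace ℝ (Fin d) | ∀ j, y j ≤ z j}).indicator p z :=
      (integral_indicator (hΔm y)).symm
    have h2 : (∫ z, ({z : EuclideanSpace ℝ (Fin d) | ∀ j, y j ≤ z j}).indicator p z)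
        = ∫ w, ({z : EuclideanSpace ℝ (Fin d) | ∀ j, y j ≤ z j}).indicator p (y + w) :=
      (integral_add_left_eq_self (({z : EuclideanSpace ℝ (Fin d) | ∀ j, y j ≤ z j}).indicator p)
        y).symm
    have h3 : ∀ w : EuclideanSpace ℝ (Fin d),
        ({z : EuclideanSpace ℝ (Fin d) | ∀ j, y j ≤ z j}).indicator p (y + w)
        = Q.indicator (fun w => p (y + w)) w := by
      intro w
      have hmem : (y + w ∈ {z : EuclideanSpace ℝ (Fin d) | ∀ j, y j ≤ z j}) ↔ w ∈ Q := by
        simp only [Set.mem_setOf_eq, hQdef, PiLp.add_apply]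
        constructor
        · intro h j; linarith [h j]
        · intro h j; linarith [h j]
      by_cases hw : w ∈ Q
      · rw [Set.indicator_of_mem (hmem.mpr hw), Set.indicator_of_mem hw]
      · rw [Set.indicator_of_notMem (fun h => hw (hmem.mp h)),
          Set.indicator_of_notMem hw]
    rw [h1, h2]
    simp_rw [h3]
    exact integral_indicator hQm
  -- the convolution
  set L : ℝ →L[ℝ] ℝ →L[ℝ] ℝ := ContinuousLinearMap.mul ℝ ℝ with hLdef
  set C : EuclideanSpace ℝ (Fin d) → ℝ := MeasureTheory.convolution a p L volume with hCdef
  have hCval : ∀ u : EuclideanSpace ℝ (Fin d), C u = ∫ t, a t * p (u - t) := by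
    intro u
    simp [hCdef, MeasureTheory.convolution, hLdef]
  have hC_int : Integrable C := ha_int.integrable_convolution L hp_int
  have hCeq : ∀ u : EuclideanSpace ℝ (Fin d), (∫ y, a (u - y) * p y) = C u := by
    intro u
    have h := integral_sub_left_eq_self (fun t => a t * p (u - t)) volume u
    simp only [sub_sub_cancel] at h
    rw [hCval u]; exact h
  have hconvW : ∀ w : EuclideanSpace ℝ (Fin d),
      (∫ y, a (x - y) * p (y + w)) = C (x + w) := by
    intro w
    have h := integral_sub_left_eq_self (fun t => a t * p (x + w - t)) volume x
    have he : ∀ y : EuclideanSpace ℝ (Fin d), x + w - (x - y) = y + w := fun y => by abel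
    simp only [he] at h
    rw [hCval (x + w)]; exact h
  -- pointwise estimate on Q
  have hap' : ∀ w ∈ Q, C (x + w) ≤ (1 + δ) * p (x + w) := by
    intro w hw
    have hxw : ∀ j, x j ≤ (x + w) j := by
      intro j; rw [PiLp.add_apply]; linarith [hw j]
    have hlt : p (x + w) < lam := hx (x + w) hxw
    have h2 := hap (x + w) hlt
    rw [← hCeq (x + w)] at *
    exact h2
  -- integrability bits
  have hax : Integrable (fun y : EuclideanSpace ℝ (Fin d) => a (x - y)) :=
    ha_int.comp_sub_left x
  have hG2 : Integrable (fun yw : EuclideanSpace ℝ (Fin d) × EuclideanSpace ℝ (Fin d) =>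
      a (x - yw.1) * p (yw.1 + yw.2))
      ((volume : Measure (EuclideanSpace ℝ (Fin d))).prod volume) := by
    have hK : Integrable (fun uv : EuclideanSpace ℝ (Fin d) × EuclideanSpace ℝ (Fin d) =>
        a (x - uv.1) * p uv.2)
        ((volume : Measure (EuclideanSpace ℝ (Fin d))).prod volume) := hax.mul_prod hp_int
    have hT : MeasurePreserving
        (fun z : EuclideanSpace ℝ (Fin d) × EuclideanSpace ℝ (Fin d) => (z.1, z.1 + z.2))
        ((volume : Measure (EuclideanSpace ℝ (Fin d))).prod volume)
        ((volume : Measure (EuclideanSpace ℝ (Fin d))).prod volume) :=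
      measurePreserving_prod_add volume volume
    exact (hT.integrable_comp hK.aestronglyMeasurable).mpr hK
  have hH : Integrable (fun yw : EuclideanSpace ℝ (Fin d) × EuclideanSpace ℝ (Fin d) =>
      a (x - yw.1) * Q.indicator (fun w => p (yw.1 + w)) yw.2)
      ((volume : Measure (EuclideanSpace ℝ (Fin d))).prod volume) := by
    have h1 : Integrable ((Set.univ ×ˢ Q).indicator
        (fun yw : EuclideanSpace ℝ (Fin d) × EuclideanSpace ℝ (Fin d) =>
          a (x - yw.1) * p (yw.1 + yw.2)))
        ((volume : Measure (EuclideanSpace ℝ (Fin d))).prod volume) :=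
      (hG2.integrableOn).integrable_indicator (MeasurableSet.univ.prod hQm)
    have h2 : (fun yw : EuclideanSpace ℝ (Fin d) × EuclideanSpace ℝ (Fin d) =>
        a (x - yw.1) * Q.indicator (fun w => p (yw.1 + w)) yw.2)
        = (Set.univ ×ˢ Q).indicator
          (fun yw : EuclideanSpace ℝ (Fin d) × EuclideanSpace ℝ (Fin d) =>
            a (x - yw.1) * p (yw.1 + yw.2)) := by
      funext yw
      by_cases hw : yw.2 ∈ Q
      · rw [Set.indicator_of_mem hw,
          Set.indicator_of_mem (by simp [Set.mem_prod, hw])]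
      · rw [Set.indicator_of_notMem hw,
          Set.indicator_of_notMem (by simp [Set.mem_prod, hw]), mul_zero]
    rw [h2]; exact h1
  -- Fubini
  have hswap : (∫ y, ∫ w, a (x - y) * Q.indicator (fun w => p (y + w)) w)
      = ∫ w, ∫ y, a (x - y) * Q.indicator (fun w => p (y + w)) w :=
    integral_integral_swap hH
  -- inner integral computations
  have hinner1 : ∀ y : EuclideanSpace ℝ (Fin d), a (x - y) * (∫ w in Q, p (y + w))
      = ∫ w, a (x - y) * Q.indicator (fun w => p (y + w)) w := by
    intro y
    rw [← integral_indicator hQm, ← integral_const_mul]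
  have hinner2 : ∀ w : EuclideanSpace ℝ (Fin d),
      (∫ y, a (x - y) * Q.indicator (fun w => p (y + w)) w)
      = Q.indicator (fun w => C (x + w)) w := by
    intro w
    by_cases hw : w ∈ Q
    · rw [Set.indicator_of_mem hw]
      simp_rw [Set.indicator_of_mem hw]
      exact hconvW w
    · rw [Set.indicator_of_notMem hw]
      simp_rw [Set.indicator_of_notMem hw, mul_zero]
      exact integral_zero _ _
  -- integrability on Q for the comparison
  have hCQ : IntegrableOn (fun w => C (x + w)) Q :=
    (hC_int.comp_add_left x).integrableOn
  have hpQ : IntegrableOn (fun w => (1 + δ) * p (x + w)) Q :=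
    ((hp_int.comp_add_left x).const_mul (1 + δ)).integrableOn
  calc (∫ y, a (x - y) * ∫ z in {z : EuclideanSpace ℝ (Fin d) | ∀ j, y j ≤ z j}, p z)
      = ∫ y, a (x - y) * ∫ w in Q, p (y + w) := by simp_rw [hΔ]
    _ = ∫ y, ∫ w, a (x - y) * Q.indicator (fun w => p (y + w)) w := by
        simp_rw [hinner1]
    _ = ∫ w, ∫ y, a (x - y) * Q.indicator (fun w => p (y + w)) w := hswap
    _ = ∫ w, Q.indicator (fun w => C (x + w)) w := by simp_rw [hinner2]
    _ = ∫ w in Q, C (x + w) := integral_indicator hQm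
    _ ≤ ∫ w in Q, (1 + δ) * p (x + w) :=
        setIntegral_mono_on hCQ hpQ hQm hap'
    _ = (1 + δ) * ∫ w in Q, p (x + w) := integral_const_mul _ _
    _ = (1 + δ) * ∫ z in {z : EuclideanSpace ℝ (Fin d) | ∀ j, x j ≤ z j}, p z := by rw [hΔ x]
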